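/- arXiv:2605.21265 — 3 statements merged into one kernel-verified Lean document; each statement's English description precedes it below -/
import Mathlib

section
/- Let x ∈ (0,1], z ∈ ℂ, and for η > 0 let m = m(iη) be the unique solution with Im(m)·η > 0 of the cubic equation -1/m = iη + x·m - |z|²/(iη + x·m). Then as η → 0⁺, m converges to (i/x)·√(x - |z|²) if |z|² ≤ x, and to 0 if |z|² > x. -/
open Filter Topology

lemma dyson_reduce (x s η : ℝ) (hx : 0 < x) (hs : 0 ≤ s) (hη : 0 < η) (M : ℂ)
    (heq : -M⁻¹ = Complex.I * (η : ℂ) + (x : ℂ) * M - ((s : ℝ) : ℂ) / (Complex.I * (η : ℂ) + (x : ℂ) * M))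
    (hb : 0 < M.im) :
    M.re = 0 ∧ η + x * M.im = M.im * ((η + x * M.im)^2 + s) := by
  have hM : M ≠ 0 := fun h => by simp [h] at hb
  have huim : (Complex.I * (η : ℂ) + (x : ℂ) * M).im = η + x * M.im := by
    simp [Complex.add_im, Complex.mul_im]
  have hu : (Complex.I * (η : ℂ) + (x : ℂ) * M) ≠ 0 := by
    intro h
    rw [h] at huim
    simp at huim
    nlinarith [mul_pos hx hb]
  field_simp at heq
  have h2 : M * ((Complex.I * (η:ℂ) + (x:ℂ) * M) * (Complex.I * (η:ℂ) + (x:ℂ) * M)) - (s:ℂ) * M + (Complex.I * (η:ℂ) + (x:ℂ) * M) = 0 := by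
    have hu' : Complex.I * (η:ℂ) + M * (x:ℂ) ≠ 0 := by rw [mul_comm M]; exact hu
    rw [eq_div_iff hu'] at heq
    linear_combination -heq
  simp only [Complex.ext_iff, Complex.add_re, Complex.add_im, Complex.mul_re, Complex.mul_im,
    Complex.sub_re, Complex.sub_im, Complex.I_re, Complex.I_im, Complex.ofReal_re,
    Complex.ofReal_im, Complex.zero_re, Complex.zero_im] at h2
  obtain ⟨hre, him⟩ := h2
  have ha : M.re = 0 := by
    by_contra h
    have h4 : M.re * (x^2*M.re^2 - (η+x*M.im)^2 - 2*M.im*x*(η+x*M.im) - s + x) = 0 := by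
      linear_combination hre
    have hE : x^2*M.re^2 - (η+x*M.im)^2 - 2*M.im*x*(η+x*M.im) - s + x = 0 :=
      (mul_eq_zero.1 h4).resolve_left h
    have hk : (η + x*M.im) * (2*M.re^2*x + 2*M.im^2*x + 1) = M.im * x := by
      linear_combination him - M.im * hE
    nlinarith [hk, mul_pos hx hb, hη,
      mul_nonneg (mul_nonneg hη.le hx.le) (sq_nonneg M.re),
      mul_nonneg (mul_nonneg hη.le hx.le) (sq_nonneg M.im),
      mul_nonneg (mul_nonneg hb.le (sq_nonneg x)) (sq_nonneg M.re),
      mul_nonneg (mul_nonneg hb.le (sq_nonneg x)) (sq_nonneg M.im)]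
  refine ⟨ha, ?_⟩
  rw [ha] at him
  linear_combination him

set_option maxHeartbeats 1000000 in
/-- Small-`η` limit of the solution `m` of the scalar Dyson equation
`-1/m = iη + x·m - |z|²/(iη + x·m)` with `Im m · η > 0`: as `η → 0⁺`, `m` converges
to `(i/x)·√(x - |z|²)` if `|z|² ≤ x`, and to `0` if `|z|² > x`. -/
theorem minor_cubic_limit (x : ℝ) (hx0 : 0 < x) (hx1 : x ≤ 1) (z : ℂ) (m : ℝ → ℂ)
    (hm : ∀ η : ℝ, 0 < η →
      (-(m η)⁻¹ = Complex.I * (η : ℂ) + (x : ℂ) * m η -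
          ((‖z‖ ^ 2 : ℝ) : ℂ) / (Complex.I * (η : ℂ) + (x : ℂ) * m η)) ∧
      0 < (m η).im) :
    Tendsto m (nhdsWithin 0 (Set.Ioi 0))
      (nhds (if ‖z‖ ^ 2 ≤ x then (Complex.I / (x : ℂ)) * ((Real.sqrt (x - ‖z‖ ^ 2) : ℝ) : ℂ)
        else 0)) := by
  set s := ‖z‖^2 with hs_def
  have hs : 0 ≤ s := by positivity
  have key : ∀ η : ℝ, 0 < η → (m η).re = 0 ∧
      η + x * (m η).im = (m η).im * ((η + x * (m η).im)^2 + s) :=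
    fun η hη => dyson_reduce x s η hx0 hs hη (m η) (hm η hη).1 (hm η hη).2
  have hbpos : ∀ η : ℝ, 0 < η → 0 < (m η).im := fun η hη => (hm η hη).2
  have hid : Tendsto (fun η : ℝ => η) (𝓝[>] (0:ℝ)) (𝓝 0) :=
    tendsto_id.mono_left nhdsWithin_le_nhds
  have hmeq : ∀ᶠ η in 𝓝[>] (0:ℝ), m η = (((m η).im : ℝ) : ℂ) * Complex.I := by
    filter_upwards [self_mem_nhdsWithin] with η hη
    have h0 := (key η hη).1
    apply Complex.ext <;> simp [h0]
  rw [tendsto_congr' hmeq]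
  by_cases hsx : s ≤ x
  · rw [if_pos hsx]
    have hc : 0 ≤ x - s := by linarith
    have hmem : Set.Ioo (0:ℝ) 1 ∈ 𝓝[>] (0:ℝ) :=
      Ioo_mem_nhdsGT_of_mem ⟨le_refl _, one_pos⟩
    have hlow : ∀ᶠ η in 𝓝[>] (0:ℝ), Real.sqrt (x - s) ≤ η + x * (m η).im := by
      filter_upwards [self_mem_nhdsWithin] with η hη
      replace hη : (0:ℝ) < η := hη
      have hb := hbpos η hη
      have heq := (key η hη).2
      have ht : 0 < η + x * (m η).im := by nlinarith [mul_pos hx0 hb]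
      have hcub : (η + x*(m η).im)*((η+x*(m η).im)^2 - (x - s)) =
          η*((η+x*(m η).im)^2 + s) := by linear_combination (-x) * heq
      have h2 : x - s ≤ (η+x*(m η).im)^2 := by
        nlinarith [mul_pos hη (by positivity : (0:ℝ) < (η+x*(m η).im)^2 + s), ht]
      calc Real.sqrt (x - s) ≤ Real.sqrt ((η+x*(m η).im)^2) := Real.sqrt_le_sqrt h2
        _ = η + x*(m η).im := Real.sqrt_sq ht.le
    have hup : ∀ᶠ η in 𝓝[>] (0:ℝ),
        η + x * (m η).im ≤ Real.sqrt (x - s) + (η*(s+4)) ^ ((3:ℝ)⁻¹) := by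
      filter_upwards [hmem] with η hη
      obtain ⟨hη, hη1⟩ := hη
      have hb := hbpos η hη
      have heq := (key η hη).2
      set b := (m η).im with hbdef
      have ht : 0 < η + x * b := by nlinarith [mul_pos hx0 hb]
      have hcub : (η + x*b)*((η+x*b)^2 - (x - s)) = η*((η+x*b)^2 + s) := by
        linear_combination (-x) * heq
      have h5 : b*(η+x*b)^2 ≤ η+x*b := by nlinarith [mul_nonneg hb.le hs]
      have hbt : b*(η+x*b) ≤ 1 := by
        rw [← mul_le_mul_iff_of_pos_right ht]
        nlinarith [h5]
      have hxb2 : x*b^2 ≤ 1 := by nlinarith [hbt, mul_nonneg hb.le hη.le]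
      have hsq : (x*b)^2 ≤ 1 := by nlinarith [hxb2, hx0.le, hx1, hx0]
      have hxb : x*b ≤ 1 := by nlinarith [hsq]
      have ht2 : η + x*b ≤ 2 := by linarith
      set δ := (η*(s+4)) ^ ((3:ℝ)⁻¹) with hδdef
      have hbase : 0 < η*(s+4) := by nlinarith
      have hδpos : 0 < δ := Real.rpow_pos_of_pos hbase _
      have hδ3 : δ^(3:ℕ) = η*(s+4) := by
        rw [hδdef, ← Real.rpow_natCast _ 3, ← Real.rpow_mul hbase.le]
        norm_num
      by_contra hcon
      push_neg at hcon
      set r := Real.sqrt (x - s) with hrdef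
      have hr2 : r^2 = x - s := Real.sq_sqrt hc
      have hr0 : 0 ≤ r := Real.sqrt_nonneg _
      have f1 : δ < (η+x*b) - r := by linarith
      have f2 : δ < (η+x*b) + r := by linarith
      have f3 : δ < η+x*b := by linarith
      have p1 : δ*δ < ((η+x*b) - r)*((η+x*b) + r) :=
        mul_lt_mul'' f1 f2 hδpos.le hδpos.le
      have p2 : δ*(δ*δ) < (η+x*b)*(((η+x*b) - r)*((η+x*b) + r)) :=
        mul_lt_mul'' f3 p1 hδpos.le (by positivity)
      have ht4 : (η+x*b)^2 ≤ 4 := by nlinarith [ht, ht2]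
      have h6 : η*((η+x*b)^2 + s) ≤ η*(4+s) :=
        mul_le_mul_of_nonneg_left (by linarith : (η+x*b)^2 + s ≤ 4 + s) hη.le
      have hδ3' : δ*(δ*δ) = η*(s+4) := by rw [← hδ3]; ring
      have e1 : (η+x*b)*(((η+x*b) - r)*((η+x*b) + r)) = η*((η+x*b)^2 + s) := by
        linear_combination hcub - (η+x*b)*hr2
      nlinarith [p2, e1, h6, hδ3']
    have htlim : Tendsto (fun η => η + x*(m η).im) (𝓝[>] (0:ℝ)) (𝓝 (Real.sqrt (x - s))) := by
      have hU : Tendsto (fun η : ℝ => Real.sqrt (x - s) + (η*(s+4)) ^ ((3:ℝ)⁻¹))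
          (𝓝[>] (0:ℝ)) (𝓝 (Real.sqrt (x - s))) := by
        have h1 : Tendsto (fun η : ℝ => η*(s+4)) (𝓝[>] (0:ℝ)) (𝓝 0) := by
          simpa using hid.mul_const (s+4)
        have h2 : Tendsto (fun y : ℝ => y ^ ((3:ℝ)⁻¹)) (𝓝 (0:ℝ)) (𝓝 0) := by
          have h3 := (Real.continuousAt_rpow_const 0 (3⁻¹) (Or.inr (by norm_num)))
          simpa [ContinuousAt, Real.zero_rpow (by norm_num : (3:ℝ)⁻¹ ≠ 0)] using h3
        simpa using tendsto_const_nhds.add (h2.comp h1)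
      exact tendsto_of_tendsto_of_tendsto_of_le_of_le' tendsto_const_nhds hU hlow hup
    have hblim : Tendsto (fun η => (m η).im) (𝓝[>] (0:ℝ)) (𝓝 (Real.sqrt (x - s) / x)) := by
      have h1 := (htlim.sub hid).div_const x
      rw [sub_zero] at h1
      refine h1.congr fun η => ?_
      field_simp
      ring
    have hval : (Complex.I / (x:ℂ)) * ((Real.sqrt (x - s) : ℝ) : ℂ) =
        ((Real.sqrt (x - s) / x : ℝ) : ℂ) * Complex.I := by
      push_cast
      ring
    rw [hval]
    exact ((Complex.continuous_ofReal.tendsto _).comp hblim).mul_const _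
  · rw [if_neg hsx]
    push_neg at hsx
    have hup : ∀ᶠ η in 𝓝[>] (0:ℝ), (m η).im ≤ η/(s-x) := by
      filter_upwards [self_mem_nhdsWithin] with η hη
      replace hη : (0:ℝ) < η := hη
      have hb := hbpos η hη
      have heq := (key η hη).2
      have h1 : (s-x) * (m η).im ≤ η := by
        nlinarith [mul_nonneg hb.le (sq_nonneg (η + x*(m η).im))]
      rw [le_div_iff₀ (by linarith)]
      linarith [h1]
    have hlow : ∀ᶠ η in 𝓝[>] (0:ℝ), (0:ℝ) ≤ (m η).im := by
      filter_upwards [self_mem_nhdsWithin] with η hη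
      exact (hbpos η hη).le
    have hUlim : Tendsto (fun η : ℝ => η/(s-x)) (𝓝[>] (0:ℝ)) (𝓝 0) := by
      simpa using hid.div_const (s-x)
    have hblim : Tendsto (fun η => (m η).im) (𝓝[>] (0:ℝ)) (𝓝 0) :=
      tendsto_of_tendsto_of_tendsto_of_le_of_le' tendsto_const_nhds hUlim hlow hup
    have := ((Complex.continuous_ofReal.tendsto _).comp hblim).mul_const Complex.I
    simpa using this
end

section
/- Let x ∈ (0,1], z ∈ ℂ, η > 0, m the solution of the cubic -1/m = iη + x·m - |z|²/(iη + x·m) with Im(m) > 0, and define u := m/(iη + x·m). Then as η → 0⁺, u converges to 1/x if |z|² ≤ x, and to 1/|z|² if |z|² > x. -/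
open Filter Topology

lemma minor_u_key (x η s : ℝ) (hx : 0 < x) (hη : 0 < η) (hs : 0 ≤ s) (m : ℂ)
    (heq : -m⁻¹ = Complex.I * (η : ℂ) + (x : ℂ) * m -
        (s : ℂ) / (Complex.I * (η : ℂ) + (x : ℂ) * m))
    (him : 0 < m.im) :
    ∃ v : ℝ, m / (Complex.I * (η : ℂ) + (x : ℂ) * m) = (v : ℂ) ∧
      0 < v ∧ x * v < 1 ∧ s * v < 1 ∧ (1 - s * v) * (1 - x * v) ^ 2 = η ^ 2 * v := by
  have hm0 : m ≠ 0 := by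
    intro h; rw [h] at him; simp at him
  set a : ℂ := Complex.I * (η : ℂ) + (x : ℂ) * m with ha
  have ha0 : a ≠ 0 := by
    intro h
    rw [h] at heq
    simp at heq
    exact hm0 heq
  have hpoly : m * a ^ 2 + a - (s : ℂ) * m = 0 := by
    field_simp at heq
    linear_combination -heq
  have hcubic : (x:ℂ)^2 * m^3 + 2 * Complex.I * η * x * m^2
      + ((x:ℂ) - s - η^2) * m + Complex.I * η = 0 := by
    rw [ha] at hpoly
    linear_combination hpoly - m * (η:ℂ)^2 * Complex.I_sq
  have hmpq : m = ((m.re:ℝ):ℂ) + ((m.im:ℝ):ℂ) * Complex.I := (Complex.re_add_im m).symm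
  rw [hmpq] at hcubic
  set p := m.re with hp
  set q := m.im with hq
  have hre := congrArg Complex.re hcubic
  have him2 := congrArg Complex.im hcubic
  simp [Complex.add_re, Complex.add_im, Complex.mul_re, Complex.mul_im, pow_succ] at hre him2
  ring_nf at hre him2
  -- show p = 0
  have hp0 : p = 0 := by
    by_contra hne
    have hfac : x - 4*x*q*η - 3*x^2*q^2 + x^2*p^2 - η^2 - s = 0 := by
      have h := mul_left_cancel₀ hne (show p * (x - 4*x*q*η - 3*x^2*q^2 + x^2*p^2 - η^2 - s) = p * 0 by
        rw [mul_zero]; linear_combination hre)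
      linarith [h]
    have hsum : 2*x*p^2*η + 2*x*q^2*η + 2*x^2*p^2*q + 2*x^2*q^3 + η = 0 := by
      linear_combination him2 - q * hfac
    have hpos : 0 < 2*x*p^2*η + 2*x*q^2*η + 2*x^2*p^2*q + 2*x^2*q^3 + η := by positivity
    linarith
  have hq3 : x^2*q^3 + 2*η*x*q^2 + (η^2 + s - x)*q - η = 0 := by
    linear_combination -him2 + (2*x*η*p + 3*x^2*q*p) * hp0
  have hmq : m = (q:ℂ) * Complex.I := by
    rw [hmpq, hp0]; ring_nf; simp
  have hden : 0 < η + x * q := by positivity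
  have hdenR : (η + x * q : ℝ) ≠ 0 := ne_of_gt hden
  set v := q / (η + x * q) with hv
  have hv0 : 0 < v := by positivity
  have hxv : x * v < 1 := by
    rw [hv, mul_div_assoc', div_lt_one hden]
    linarith
  have hid : (1 - s * v) * (1 - x * v) ^ 2 = η ^ 2 * v := by
    rw [hv]
    have hdenR' : η + q * x ≠ 0 := by rw [mul_comm q x]; exact hdenR
    field_simp
    linear_combination (-(η^2)) * hq3
  have hsv : s * v < 1 := by
    have h1 : 0 < 1 - x * v := by linarith
    nlinarith [pow_pos h1 2, mul_pos (mul_pos hη hη) hv0]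
  refine ⟨v, ?_, hv0, hxv, hsv, hid⟩
  rw [ha, hmq]
  have h2 : Complex.I * (η:ℂ) + (x:ℂ)*((q:ℂ)*Complex.I) = ((η + x*q : ℝ):ℂ) * Complex.I := by
    push_cast; ring
  rw [h2, mul_div_mul_right _ _ Complex.I_ne_zero, hv]
  push_cast
  ring

lemma dist_ofReal' (a b : ℝ) : dist ((a:ℝ):ℂ) ((b:ℝ):ℂ) = |a - b| := by
  rw [Complex.dist_eq, ← Complex.ofReal_sub, Complex.norm_real, Real.norm_eq_abs]

/-- Small-`η` limit of `u = m/(iη + x·m)` where `m` solves the cubic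
`-1/m = iη + x·m - |z|²/(iη + x·m)` with `Im m > 0`: as `η → 0⁺`, `u` converges to
`1/x` if `|z|² ≤ x` and to `1/|z|²` if `|z|² > x`. -/
theorem minor_u_limit (x : ℝ) (hx0 : 0 < x) (hx1 : x ≤ 1) (z : ℂ) (m : ℝ → ℂ)
    (hm : ∀ η : ℝ, 0 < η →
      (-(m η)⁻¹ = Complex.I * (η : ℂ) + (x : ℂ) * m η -
          ((‖z‖ ^ 2 : ℝ) : ℂ) / (Complex.I * (η : ℂ) + (x : ℂ) * m η)) ∧
      0 < (m η).im) :
    Tendsto (fun η : ℝ => m η / (Complex.I * (η : ℂ) + (x : ℂ) * m η))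
      (nhdsWithin 0 (Set.Ioi 0))
      (nhds (if ‖z‖ ^ 2 ≤ x then ((1 / x : ℝ) : ℂ) else ((1 / ‖z‖ ^ 2 : ℝ) : ℂ))) := by
  set s : ℝ := ‖z‖ ^ 2 with hsdef
  have hs : 0 ≤ s := by positivity
  by_cases hc : s ≤ x
  · rw [if_pos hc, Metric.tendsto_nhdsWithin_nhds]
    intro ε hε
    refine ⟨Real.sqrt (x * (x * ε) ^ 3), by positivity, ?_⟩
    intro η hηmem hdist
    have hη : 0 < η := hηmem
    obtain ⟨v, huv, hv0, hxv, hsv, hid⟩ :=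
      minor_u_key x η s hx0 hη hs (m η) (hm η hη).1 (hm η hη).2
    rw [huv, dist_ofReal']
    have hη2 : η ^ 2 < x * (x * ε) ^ 3 := by
      have h1 : |η - 0| < Real.sqrt (x * (x * ε) ^ 3) := by
        rw [← Real.dist_eq]; exact hdist
      rw [sub_zero, abs_of_pos hη] at h1
      have h2 := Real.sq_sqrt (by positivity : (0:ℝ) ≤ x * (x * ε) ^ 3)
      nlinarith [Real.sqrt_nonneg (x * (x * ε) ^ 3)]
    have hA : 0 ≤ 1 - x * v := le_of_lt (by linarith)
    have hvx : v < 1 / x := by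
      rw [lt_div_iff₀ hx0]; linarith
    have hcube : (1 - x * v) ^ 3 ≤ η ^ 2 * v := by
      have h3 : 1 - x * v ≤ 1 - s * v := by nlinarith
      nlinarith [sq_nonneg (1 - x * v)]
    have hcube2 : (1 - x * v) ^ 3 < (x * ε) ^ 3 := by
      have : η ^ 2 * v < (x * ε) ^ 3 := by
        have hxe : η ^ 2 * v ≤ η ^ 2 * (1 / x) := by nlinarith
        calc η ^ 2 * v ≤ η ^ 2 * (1 / x) := hxe
          _ < (x * (x * ε) ^ 3) * (1 / x) := by
              apply mul_lt_mul_of_pos_right hη2 (by positivity)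
          _ = (x * ε) ^ 3 := by field_simp
      linarith
    have hAB : 1 - x * v < x * ε := by
      nlinarith [sq_nonneg (1 - x * v + x * ε), sq_nonneg (1 - x * v - x * ε),
        mul_pos hx0 hε]
    have habs : |v - 1 / x| = 1 / x - v := by
      rw [abs_of_neg (by linarith)]; ring
    rw [habs]
    have hxx : x * (1 / x) = 1 := mul_one_div_cancel (ne_of_gt hx0)
    nlinarith
  · push_neg at hc
    have hs0 : 0 < s := lt_trans hx0 hc
    rw [if_neg (not_le.mpr hc), Metric.tendsto_nhdsWithin_nhds]
    intro ε hε
    refine ⟨(s - x) * Real.sqrt ε, mul_pos (sub_pos.mpr hc) (Real.sqrt_pos.mpr hε), ?_⟩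
    intro η hηmem hdist
    have hη : 0 < η := hηmem
    obtain ⟨v, huv, hv0, hxv, hsv, hid⟩ :=
      minor_u_key x η s hx0 hη hs (m η) (hm η hη).1 (hm η hη).2
    rw [huv, dist_ofReal']
    have hη2 : η ^ 2 < (s - x) ^ 2 * ε := by
      have h1 : |η - 0| < (s - x) * Real.sqrt ε := by
        rw [← Real.dist_eq]; exact hdist
      rw [sub_zero, abs_of_pos hη] at h1
      have h2 := Real.sq_sqrt (le_of_lt hε)
      nlinarith [Real.sqrt_nonneg ε, mul_pos (sub_pos.mpr hc) (Real.sqrt_pos.mpr hε)]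
    have hvs : v < 1 / s := by rw [lt_div_iff₀ hs0]; linarith
    -- s*(1-x*v) > s - x > 0
    have h2 : s - x < s * (1 - x * v) := by nlinarith
    have hsx : 0 < s - x := sub_pos.mpr hc
    have h1sv : 0 < 1 - s * v := by linarith
    have hsq : (s - x) ^ 2 < (s * (1 - x * v)) ^ 2 := by nlinarith
    have h3a : (s - x) ^ 2 * (1 - s * v) < (s * (1 - x * v)) ^ 2 * (1 - s * v) :=
      mul_lt_mul_of_pos_right hsq h1sv
    have h3b : (s * (1 - x * v)) ^ 2 * (1 - s * v) = s ^ 2 * (η ^ 2 * v) := by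
      linear_combination s ^ 2 * hid
    have hpos2 : 0 < s * η ^ 2 := by positivity
    have h3c : s ^ 2 * (η ^ 2 * v) < s * η ^ 2 := by
      calc s ^ 2 * (η ^ 2 * v) = s * η ^ 2 * (s * v) := by ring
        _ < s * η ^ 2 * 1 := mul_lt_mul_of_pos_left hsv hpos2
        _ = s * η ^ 2 := mul_one _
    have h3 : (s - x) ^ 2 * (1 - s * v) < s * η ^ 2 := by linarith
    have h6 : (s - x) ^ 2 * (1 - s * v) < (s - x) ^ 2 * (s * ε) := by
      calc (s - x) ^ 2 * (1 - s * v) < s * η ^ 2 := h3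
        _ < s * ((s - x) ^ 2 * ε) := mul_lt_mul_of_pos_left hη2 hs0
        _ = (s - x) ^ 2 * (s * ε) := by ring
    have h4 : 1 - s * v < s * ε :=
      lt_of_mul_lt_mul_left h6 (le_of_lt (by positivity : (0:ℝ) < (s - x) ^ 2))
    have habs : |v - 1 / s| = 1 / s - v := by
      rw [abs_of_neg (by linarith)]; ring
    rw [habs]
    have heq2 : 1 / s - v = (1 - s * v) / s := by field_simp
    rw [heq2, div_lt_iff₀ hs0]
    linarith [h4]
end

section
/- Let x₁, x₂ ∈ (0,1] with x₁ ≤ x₂, and suppose for j = 1,2 that m_j, u_j satisfy the relations coming from the Dyson cubic at w_j = iη_j with η_j > 0: u_j = m_j/(iη_j + x_j m_j), -1/m_j = iη_j + x_j m_j - |z_j|² u_j/m_j · m_j (i.e. the cubic equation), with m_j purely imaginary and u_j real positive. Then β₊β₋ = x₁u₁u₂|z₁-z₂|² + (1-x₁u₁)(1-x₁u₂) + x₁|Im m₁|²·u₂·(1-x₁u₁)/u₁ + x₁|Im m₂|²·u₁·(1-x₁u₂)/u₂, where β₊β₋ := 1 + x₁²(u₁u₂|z₁z₂|)² - x₁²m₁²m₂²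 - 2x₁u₁u₂·Re(z₁·conj(z₂)). -/
lemma key_aux (x η : ℝ) (A m u : ℂ)
    (hu : u = m / (Complex.I * (η : ℂ) + (x : ℂ) * m))
    (hc : -m⁻¹ = Complex.I * (η : ℂ) + (x : ℂ) * m -
      A / (Complex.I * (η : ℂ) + (x : ℂ) * m))
    (hu0 : u ≠ 0) : m ^ 2 = u * (A * u - 1) := by
  set d := Complex.I * (η : ℂ) + (x : ℂ) * m with hd
  have hd0 : d ≠ 0 := by
    intro h; apply hu0; rw [hu, h, div_zero]
  have hm0 : m ≠ 0 := by
    intro h; apply hu0; rw [hu, h, zero_div]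
  have hud : u * d = m := by rw [hu]; field_simp
  have hc' : -d = m * d ^ 2 - A * m := by
    field_simp at hc
    linear_combination hc
  have h3 : d * (u * d ^ 2 - A * u + 1) = 0 := by
    linear_combination (d ^ 2 - A) * hud - hc'
  have h4 : u * d ^ 2 - A * u + 1 = 0 := by
    rcases mul_eq_zero.mp h3 with h | h
    · exact absurd h hd0
    · exact h
  linear_combination -(u * d + m) * hud + u * h4

/-- on the imaginary axis, the product of the two nontrivial stability
eigenvalues, `β₊β₋ = 1 + x₁²(u₁u₂|z₁z₂|)² - x₁²m₁²m₂² - 2x₁u₁u₂·Re(z₁·conj z₂)`,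
factorizes as a sum of four manifestly nonnegative terms. -/
theorem beta_product_factorization (x₁ x₂ η₁ η₂ : ℝ) (z₁ z₂ m₁ m₂ u₁ u₂ : ℂ)
    (hx₁ : 0 < x₁) (h12 : x₁ ≤ x₂) (hx₂ : x₂ ≤ 1) (hη₁ : 0 < η₁) (hη₂ : 0 < η₂)
    (hu₁ : u₁ = m₁ / (Complex.I * (η₁ : ℂ) + (x₁ : ℂ) * m₁))
    (hu₂ : u₂ = m₂ / (Complex.I * (η₂ : ℂ) + (x₂ : ℂ) * m₂))
    (hc₁ : -m₁⁻¹ = Complex.I * (η₁ : ℂ) + (x₁ : ℂ) * m₁ -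
      ((‖z₁‖ ^ 2 : ℝ) : ℂ) / (Complex.I * (η₁ : ℂ) + (x₁ : ℂ) * m₁))
    (hc₂ : -m₂⁻¹ = Complex.I * (η₂ : ℂ) + (x₂ : ℂ) * m₂ -
      ((‖z₂‖ ^ 2 : ℝ) : ℂ) / (Complex.I * (η₂ : ℂ) + (x₂ : ℂ) * m₂))
    (hm₁ : m₁.re = 0) (hm₂ : m₂.re = 0)
    (hu₁im : u₁.im = 0) (hu₂im : u₂.im = 0)
    (hu₁pos : 0 < u₁.re) (hu₂pos : 0 < u₂.re) :
    1 + (x₁ : ℂ) ^ 2 * (u₁ * u₂ * ((‖z₁‖ * ‖z₂‖ : ℝ) : ℂ)) ^ 2 -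
        (x₁ : ℂ) ^ 2 * m₁ ^ 2 * m₂ ^ 2 -
        2 * (x₁ : ℂ) * u₁ * u₂ * (((z₁ * (starRingEnd ℂ) z₂).re : ℝ) : ℂ)
    = (x₁ : ℂ) * u₁ * u₂ * ((‖z₁ - z₂‖ ^ 2 : ℝ) : ℂ) +
        (1 - (x₁ : ℂ) * u₁) * (1 - (x₁ : ℂ) * u₂) +
        (x₁ : ℂ) * ((|m₁.im| ^ 2 : ℝ) : ℂ) * u₂ * (1 - (x₁ : ℂ) * u₁) / u₁ +
        (x₁ : ℂ) * ((|m₂.im| ^ 2 : ℝ) : ℂ) * u₁ * (1 - (x₁ : ℂ) * u₂) / u₂ := by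
  have hu₁0 : u₁ ≠ 0 := fun h => by simp [h] at hu₁pos
  have hu₂0 : u₂ ≠ 0 := fun h => by simp [h] at hu₂pos
  have key₁ := key_aux x₁ η₁ ((‖z₁‖ ^ 2 : ℝ) : ℂ) m₁ u₁ hu₁ hc₁ hu₁0
  have key₂ := key_aux x₂ η₂ ((‖z₂‖ ^ 2 : ℝ) : ℂ) m₂ u₂ hu₂ hc₂ hu₂0
  -- rewrite |Im m|² in terms of m²
  have him₁ : ((|m₁.im| ^ 2 : ℝ) : ℂ) = u₁ * (1 - ((‖z₁‖ ^ 2 : ℝ) : ℂ) * u₁) := by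
    have h : ((|m₁.im| ^ 2 : ℝ) : ℂ) = -m₁ ^ 2 := by
      apply Complex.ext <;>
        simp [Complex.ofReal_pow, pow_two, Complex.mul_re, Complex.mul_im, hm₁, abs_mul_abs_self]
    rw [h, key₁]; ring
  have him₂ : ((|m₂.im| ^ 2 : ℝ) : ℂ) = u₂ * (1 - ((‖z₂‖ ^ 2 : ℝ) : ℂ) * u₂) := by
    have h : ((|m₂.im| ^ 2 : ℝ) : ℂ) = -m₂ ^ 2 := by
      apply Complex.ext <;>
        simp [Complex.ofReal_pow, pow_two, Complex.mul_re, Complex.mul_im, hm₂, abs_mul_abs_self]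
    rw [h, key₂]; ring
  -- expand ‖z₁ - z₂‖²
  have hN : ((‖z₁ - z₂‖ ^ 2 : ℝ) : ℂ) = ((‖z₁‖ ^ 2 : ℝ) : ℂ) + ((‖z₂‖ ^ 2 : ℝ) : ℂ) -
      2 * (((z₁ * (starRingEnd ℂ) z₂).re : ℝ) : ℂ) := by
    have h : (‖z₁ - z₂‖ ^ 2 : ℝ) = ‖z₁‖ ^ 2 + ‖z₂‖ ^ 2 - 2 * (z₁ * (starRingEnd ℂ) z₂).re := by
      simp only [Complex.sq_norm, Complex.normSq_apply, Complex.sub_re,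
        Complex.sub_im, Complex.mul_re, Complex.conj_re, Complex.conj_im]
      ring
    rw [h]; push_cast; ring
  -- expand (‖z₁‖ * ‖z₂‖)²
  have hQ : (u₁ * u₂ * ((‖z₁‖ * ‖z₂‖ : ℝ) : ℂ)) ^ 2 =
      u₁ ^ 2 * u₂ ^ 2 * ((‖z₁‖ ^ 2 : ℝ) : ℂ) * ((‖z₂‖ ^ 2 : ℝ) : ℂ) := by
    push_cast; ring
  rw [him₁, him₂, hN, hQ, key₁, key₂]
  field_simp
  ring
end
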